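/- Let F : ℝ^d → ℝ⁺ be a continuous, integrable, radial function whose radial profile F_rad is non-increasing, let r ∈ ℝ, and let 𝓛 ⊆ ℤ^d be a set of lattice points all of whose coordinates are non-zero. Then the sum of F(x) over x ∈ 𝓛 with ‖x‖ ≥ r is at most the integral of F over the complement of the open ball B(0, r − √d) in ℝ^d. -/

import Mathlib

open scoped BigOperators
open MeasureTheory

private def cc (n : ℤ) : ℤ := if n < 0 then n else n - 1

private lemma cc_inj {m n : ℤ} (hm : m ≠ 0) (hn : n ≠ 0) (h : cc m = cc n) : m = n := by
  unfold cc at h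
  split_ifs at h <;> omega

private def cube (d : ℕ) (x : Fin d → ℤ) : Set (Fin d → ℝ) :=
  Set.univ.pi fun i => Set.Ico ((cc (x i) : ℝ)) ((cc (x i) : ℝ) + 1)

private lemma cube_meas (d : ℕ) (x : Fin d → ℤ) : MeasurableSet (cube d x) :=
  MeasurableSet.univ_pi fun _ => measurableSet_Ico

private lemma cube_vol (d : ℕ) (x : Fin d → ℤ) : volume (cube d x) = 1 := by
  rw [cube, volume_pi_pi]
  simp [Real.volume_Ico]

private lemma cube_coord {d : ℕ} {x : Fin d → ℤ} {u : Fin d → ℝ}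
    (hu : u ∈ cube d x) (i : Fin d) (hx : x i ≠ 0) :
    |u i| ≤ |(x i : ℝ)| ∧ |(x i : ℝ) - u i| ≤ 1 := by
  have h := hu i (Set.mem_univ i)
  simp only [Set.mem_Ico] at h
  unfold cc at h
  split_ifs at h with hneg
  · have hxle : (x i : ℝ) ≤ -1 := by exact_mod_cast (by omega : x i ≤ -1)
    have h1 : (x i : ℝ) ≤ u i := by linarith [h.1]
    have h2 : u i < (x i : ℝ) + 1 := by linarith [h.2]
    constructor
    · rw [abs_of_nonpos (by linarith), abs_of_nonpos (by linarith)]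
      linarith
    · rw [abs_of_nonpos (by linarith)]
      linarith
  · have hxge : (1 : ℝ) ≤ (x i : ℝ) := by exact_mod_cast (by omega : (1:ℤ) ≤ x i)
    push_cast at h
    have h1 : (x i : ℝ) - 1 ≤ u i := by linarith [h.1]
    have h2 : u i < (x i : ℝ) := by linarith [h.2]
    constructor
    · rw [abs_of_nonneg (by linarith), abs_of_nonneg (by linarith)]
      linarith
    · rw [abs_of_nonneg (by linarith)]
      linarith

private lemma nrm_mono {d : ℕ} {u v : Fin d → ℝ} (h : ∀ i, |u i| ≤ |v i|) :
    Real.sqrt (∑ i, u i ^ 2) ≤ Real.sqrt (∑ i, v i ^ 2) := by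
  apply Real.sqrt_le_sqrt
  apply Finset.sum_le_sum
  intro i _
  rw [← sq_abs (u i), ← sq_abs (v i)]
  exact pow_le_pow_left₀ (abs_nonneg _) (h i) 2

private lemma nrm_eq {d : ℕ} (u : Fin d → ℝ) :
    ‖(WithLp.equiv 2 (Fin d → ℝ)).symm u‖ = Real.sqrt (∑ i, u i ^ 2) := by
  rw [EuclideanSpace.norm_eq]
  congr 1
  apply Finset.sum_congr rfl
  intro i _
  rw [show (WithLp.equiv 2 (Fin d → ℝ)).symm u i = u i from rfl, Real.norm_eq_abs, sq_abs]

private lemma nrm_triangle {d : ℕ} (x u : Fin d → ℝ) :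
    Real.sqrt (∑ i, x i ^ 2) ≤
      Real.sqrt (∑ i, u i ^ 2) + Real.sqrt (∑ i, (x i - u i) ^ 2) := by
  have h1 := nrm_eq x
  have h2 := nrm_eq u
  have h3 := nrm_eq (fun i => x i - u i)
  set X := (WithLp.equiv 2 (Fin d → ℝ)).symm x with hX
  set U := (WithLp.equiv 2 (Fin d → ℝ)).symm u with hU
  have hXU : (WithLp.equiv 2 (Fin d → ℝ)).symm (fun i => x i - u i) = X - U := rfl
  rw [hXU] at h3
  rw [← h1, ← h2, ← h3]
  have h := norm_add_le U (X - U)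
  simpa using h

private lemma nrm_le_sqrt_d {d : ℕ} {w : Fin d → ℝ} (h : ∀ i, |w i| ≤ 1) :
    Real.sqrt (∑ i, w i ^ 2) ≤ Real.sqrt d := by
  apply Real.sqrt_le_sqrt
  calc ∑ i, w i ^ 2 ≤ ∑ _i : Fin d, (1 : ℝ) := by
        apply Finset.sum_le_sum
        intro i _
        rw [← sq_abs]
        nlinarith [h i, abs_nonneg (w i)]
    _ = d := by simp

theorem stmt_2 (d : ℕ) (hd : 0 < d) (r : ℝ)
    (F : (Fin d → ℝ) → ℝ) (hFpos : ∀ u, 0 ≤ F u)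
    (hFcont : Continuous F) (hFint : Integrable F)
    (hFrad : ∀ u v : Fin d → ℝ,
      Real.sqrt (∑ i, u i ^ 2) ≤ Real.sqrt (∑ i, v i ^ 2) → F v ≤ F u)
    (L : Set (Fin d → ℤ)) (hL : ∀ x ∈ L, ∀ i, x i ≠ 0) :
    (∑' x : L, if r ≤ Real.sqrt (∑ i, ((x.1 i : ℝ)) ^ 2) then F (fun i => (x.1 i : ℝ)) else 0)
    ≤ ∫ u in {u : Fin d → ℝ | r - Real.sqrt d ≤ Real.sqrt (∑ i, u i ^ 2)}, F u := by
  classical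
  set S : Set (Fin d → ℝ) :=
    {u : Fin d → ℝ | r - Real.sqrt d ≤ Real.sqrt (∑ i, u i ^ 2)} with hS
  set s : L → Set (Fin d → ℝ) := fun x =>
    if r ≤ Real.sqrt (∑ i, ((x.1 i : ℝ)) ^ 2) then cube d x.1 else ∅ with hs
  have smeas : ∀ x : L, MeasurableSet (s x) := by
    intro x
    simp only [hs]
    split_ifs
    · exact cube_meas d x.1
    · exact MeasurableSet.empty
  -- each s x is contained in S
  have ssub : ∀ x : L, s x ⊆ S := by
    intro x u hu
    simp only [hs] at hu
    split_ifs at hu with hr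
    · have hcoord := fun i => cube_coord hu i (hL x.1 x.2 i)
      have h1 : Real.sqrt (∑ i, ((x.1 i : ℝ)) ^ 2) ≤
          Real.sqrt (∑ i, u i ^ 2) + Real.sqrt d := by
        refine (nrm_triangle (fun i => (x.1 i : ℝ)) u).trans ?_
        exact add_le_add le_rfl (nrm_le_sqrt_d fun i => (hcoord i).2)
      rw [hS]
      simp only [Set.mem_setOf_eq]
      linarith
    · exact absurd hu (Set.notMem_empty u)
  -- disjointness
  have sdisj : Pairwise (Function.onFun Disjoint s) := by
    intro x y hxy
    simp only [Function.onFun, hs]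
    split_ifs with h1 h2 h2
    · -- both cubes
      rw [Set.disjoint_left]
      intro u hux huy
      have hne : x.1 ≠ y.1 := fun h => hxy (Subtype.ext h)
      obtain ⟨i, hi⟩ := Function.ne_iff.mp hne
      have hcc : cc (x.1 i) ≠ cc (y.1 i) := by
        intro h
        exact hi (cc_inj (hL x.1 x.2 i) (hL y.1 y.2 i) h)
      have hux' := hux i (Set.mem_univ i)
      have huy' := huy i (Set.mem_univ i)
      simp only [Set.mem_Ico] at hux' huy'
      rcases lt_or_gt_of_ne hcc with h | h
      · have : (cc (x.1 i) : ℝ) + 1 ≤ (cc (y.1 i) : ℝ) := by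
          exact_mod_cast (by omega : cc (x.1 i) + 1 ≤ cc (y.1 i))
        linarith [hux'.2, huy'.1]
      · have : (cc (y.1 i) : ℝ) + 1 ≤ (cc (x.1 i) : ℝ) := by
          exact_mod_cast (by omega : cc (y.1 i) + 1 ≤ cc (x.1 i))
        linarith [hux'.1, huy'.2]
    all_goals simp
  -- integrability on the union
  have hIntU : IntegrableOn F (⋃ x : L, s x) volume := hFint.integrableOn
  have hsum := hasSum_integral_iUnion smeas sdisj hIntU
  -- termwise bound
  have hterm : ∀ x : L,
      (if r ≤ Real.sqrt (∑ i, ((x.1 i : ℝ)) ^ 2) then F (fun i => (x.1 i : ℝ)) else 0)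
      ≤ ∫ u in s x, F u := by
    intro x
    simp only [hs]
    split_ifs with hr
    · -- F(x) ≤ ∫ over cube
      have hle : ∀ u ∈ cube d x.1, F (fun i => (x.1 i : ℝ)) ≤ F u := by
        intro u hu
        apply hFrad
        exact nrm_mono fun i => (cube_coord hu i (hL x.1 x.2 i)).1
      have := setIntegral_ge_of_const_le (cube_meas d x.1)
        (by rw [cube_vol]; exact ENNReal.one_ne_top) hle hFint.integrableOn
      rwa [measureReal_def, cube_vol, ENNReal.toReal_one, one_smul] at this
    · simp
  -- combine
  have hsummable : Summable (fun x : L => ∫ u in s x, F u) := hsum.summable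
  calc (∑' x : L, if r ≤ Real.sqrt (∑ i, ((x.1 i : ℝ)) ^ 2)
          then F (fun i => (x.1 i : ℝ)) else 0)
      ≤ ∑' x : L, ∫ u in s x, F u := by
        apply Summable.tsum_le_tsum hterm _ hsummable
        apply Summable.of_nonneg_of_le _ hterm hsummable
        intro x
        split_ifs
        · exact hFpos _
        · exact le_rfl
      _ = ∫ u in ⋃ x : L, s x, F u := hsum.tsum_eq
      _ ≤ ∫ u in S, F u := by
        apply setIntegral_mono_set hFint.integrableOn
        · exact Filter.Eventually.of_forall fun u => hFpos u
        · exact Filter.Eventually.of_forall (Set.iUnion_subset ssub)
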